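/- Every graphon W with a bounded clique number is countably-partite: there is a measurable partition Ω = Ω₁ ∪ Ω₂ ∪ … into countably many sets such that for each i, the restriction of W to Ω_i × Ω_i is 0 almost everywhere. -/

import Mathlib

open MeasureTheory

/-- The homomorphism density `t(K_k, W)` of the complete graph `K_k` in a graphon `W`. -/
noncomputable def cliqueDensity {Ω : Type*} [MeasurableSpace Ω] (μ : Measure Ω)
    (W : Ω → Ω → ℝ) (k : ℕ) : ENNReal :=
  ∫⁻ x : Fin k → Ω,
      ∏ p ∈ Finset.univ.filter (fun p : Fin k × Fin k => p.1 < p.2),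
        ENNReal.ofReal (W (x p.1) (x p.2))
    ∂(Measure.pi fun _ => μ)

open Set Function
open scoped ENNReal

section Aux
variable {Ω : Type*} [MeasurableSpace Ω] (W : Ω → Ω → ℝ)

noncomputable def PP (k : ℕ) (x : Fin k → Ω) : ℝ≥0∞ :=
  ∏ p ∈ Finset.univ.filter (fun p : Fin k × Fin k => p.1 < p.2),
    ENNReal.ofReal (W (x p.1) (x p.2))

noncomputable def QQ (ν : Measure Ω) (k : ℕ) : ℝ≥0∞ :=
  ∫⁻ x : Fin k → Ω, PP W k x ∂(Measure.pi fun _ => ν)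

variable {W}

lemma measurable_PP (hW : Measurable (uncurry W)) {k : ℕ} : Measurable (PP W k) := by
  apply Finset.measurable_prod
  intro p _
  have h : Measurable fun x : Fin k → Ω => (x p.1, x p.2) :=
    (measurable_pi_apply p.1).prodMk (measurable_pi_apply p.2)
  exact ENNReal.measurable_ofReal.comp (hW.comp h)

lemma PP_le_one (h1 : ∀ x y, W x y ≤ 1) {k : ℕ} (x : Fin k → Ω) : PP W k x ≤ 1 :=
  Finset.prod_le_one (fun _ _ => zero_le) (fun _ _ => ENNReal.ofReal_le_one.2 (h1 _ _))

lemma prod_split {k : ℕ} (g : Fin (k+1) × Fin (k+1) → ℝ≥0∞) :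
    ∏ p ∈ Finset.univ.filter (fun p : Fin (k+1) × Fin (k+1) => p.1 < p.2), g p
      = (∏ j : Fin k, g (0, j.succ)) *
        ∏ p ∈ Finset.univ.filter (fun p : Fin k × Fin k => p.1 < p.2), g (p.1.succ, p.2.succ) := by
  rw [Finset.prod_filter, Finset.prod_filter, ← Finset.univ_product_univ,
    Finset.prod_product, Fin.prod_univ_succ]
  simp only [Fin.prod_univ_succ, Fin.succ_pos, Fin.succ_lt_succ_iff, lt_irrefl,
    Fin.not_lt_zero, if_true, if_false, one_mul]
  congr 1
  rw [← Finset.univ_product_univ, Finset.prod_product]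

lemma PP_cons {k : ℕ} (a : Ω) (y : Fin k → Ω) :
    PP W (k+1) (Fin.cons a y) = (∏ j, ENNReal.ofReal (W a (y j))) * PP W k y := by
  rw [PP, prod_split]
  simp [PP]

end Aux

section B
variable {Ω : Type*} [MeasurableSpace Ω] {W : Ω → Ω → ℝ}

lemma pi_restrict (μ : Measure Ω) [IsFiniteMeasure μ] {A : Set Ω} (_hA : MeasurableSet A) (k : ℕ) :
    (Measure.pi fun _ : Fin k => μ.restrict A)
      = (Measure.pi fun _ : Fin k => μ).restrict (Set.pi Set.univ fun _ => A) := by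
  refine (Measure.pi_eq (μ := fun _ : Fin k => μ.restrict A)
    (μ' := (Measure.pi fun _ : Fin k => μ).restrict (Set.pi Set.univ fun _ => A)) fun s hs => ?_)
  rw [Measure.restrict_apply (MeasurableSet.univ_pi hs), ← Set.pi_inter_distrib,
    Measure.pi_pi]
  simp_rw [Measure.restrict_apply (hs _)]

section C
variable {Ω : Type*} [MeasurableSpace Ω] {W : Ω → Ω → ℝ}

lemma QQ_one (ν : Measure Ω) [IsFiniteMeasure ν] : QQ W ν 1 = ν Set.univ := by
  have h : ∀ x : Fin 1 → Ω, PP W 1 x = 1 := by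
    intro x
    refine Finset.prod_eq_one fun p hp => absurd (Finset.mem_filter.1 hp).2 ?_
    rw [Subsingleton.elim p.1 p.2]
    exact lt_irrefl _
  simp only [QQ, h, lintegral_one]
  rw [Measure.pi_univ]
  simp

lemma QQ_le_pow (ν : Measure Ω) [IsFiniteMeasure ν] (h1 : ∀ x y, W x y ≤ 1) (k : ℕ) :
    QQ W ν k ≤ ν Set.univ ^ k := by
  calc QQ W ν k ≤ ∫⁻ _x : Fin k → Ω, 1 ∂(Measure.pi fun _ => ν) :=
        lintegral_mono (PP_le_one h1)
    _ = ν Set.univ ^ k := by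
        rw [lintegral_one, Measure.pi_univ, Finset.prod_const, Finset.card_univ,
          Fintype.card_fin]

lemma QQ_restrict_le (μ : Measure Ω) [IsFiniteMeasure μ] {A : Set Ω} (hA : MeasurableSet A)
    (k : ℕ) : QQ W (μ.restrict A) k ≤ QQ W μ k := by
  rw [QQ, pi_restrict μ hA k]
  exact lintegral_mono' Measure.restrict_le_self le_rfl

lemma QQ_succ (ν : Measure Ω) [IsFiniteMeasure ν] (hW : Measurable (uncurry W)) (k : ℕ) :
    QQ W ν (k+1) = ∫⁻ a, (∫⁻ y : Fin k → Ω,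
        (∏ j, ENNReal.ofReal (W a (y j))) * PP W k y ∂(Measure.pi fun _ => ν)) ∂ν := by
  have hmp := (measurePreserving_piFinSuccAbove (fun _ : Fin (k+1) => ν) 0).symm
  have hemb := (MeasurableEquiv.piFinSuccAbove (fun _ : Fin (k+1) => Ω) 0).symm.measurableEmbedding
  rw [QQ, ← hmp.lintegral_comp_emb hemb]
  have hmeas : Measurable fun z : Ω × (Fin k → Ω) => PP W (k+1)
      ((MeasurableEquiv.piFinSuccAbove (fun _ : Fin (k+1) => Ω) 0).symm z) :=
    (measurable_PP hW).comp (MeasurableEquiv.measurable _)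
  rw [lintegral_prod _ hmeas.aemeasurable]
  refine lintegral_congr fun a => lintegral_congr fun y => ?_
  have he : (MeasurableEquiv.piFinSuccAbove (fun _ : Fin (k+1) => Ω) 0).symm (a, y)
      = Fin.cons a y := by
    simp [MeasurableEquiv.piFinSuccAbove, Fin.insertNthEquiv, Fin.insertNth_zero]
  rw [he, PP_cons]

end C
end B

section D
variable {Ω : Type*} [MeasurableSpace Ω] {W : Ω → Ω → ℝ}

lemma QQ_two (ν : Measure Ω) [IsFiniteMeasure ν] (hW : Measurable (uncurry W)) :
    QQ W ν 2 = ∫⁻ z, ENNReal.ofReal (W z.1 z.2) ∂(ν.prod ν) := by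
  rw [QQ_succ ν hW 1]
  have h1 : ∀ y : Fin 1 → Ω, PP W 1 y = 1 := by
    intro y
    refine Finset.prod_eq_one fun p hp => absurd (Finset.mem_filter.1 hp).2 ?_
    rw [Subsingleton.elim p.1 p.2]; exact lt_irrefl _
  have hm : Measurable fun z : Ω × Ω => ENNReal.ofReal (W z.1 z.2) :=
    ENNReal.measurable_ofReal.comp hW
  rw [lintegral_prod _ hm.aemeasurable]
  refine lintegral_congr fun a => ?_
  have hmp := measurePreserving_funUnique ν (Fin 1)
  have hemb := (MeasurableEquiv.funUnique (Fin 1) Ω).measurableEmbedding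
  rw [← hmp.lintegral_comp_emb hemb (fun b => ENNReal.ofReal (W a b))]
  refine lintegral_congr fun y => ?_
  simp [h1, Fin.prod_univ_one, MeasurableEquiv.funUnique]

/-- The inner integral vanishes iff the restricted clique density vanishes. -/
lemma inner_iff (μ : Measure Ω) [IsFiniteMeasure μ] (hW : Measurable (uncurry W))
    {A : Set Ω} (a : Ω) (m : ℕ) :
    ((∫⁻ y : Fin m → Ω, (∏ j, ENNReal.ofReal (W a (y j))) * PP W m y
        ∂(Measure.pi fun _ => μ.restrict A)) = 0)
      ↔ QQ W (μ.restrict (A ∩ {z | 0 < W a z})) m = 0 := by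
  have hS : MeasurableSet {z | 0 < W a z} :=
    measurableSet_lt measurable_const (hW.comp measurable_prodMk_left)
  have hres : μ.restrict (A ∩ {z | 0 < W a z}) = (μ.restrict A).restrict {z | 0 < W a z} := by
    rw [Measure.restrict_restrict hS, Set.inter_comm]
  rw [QQ, hres, pi_restrict (μ.restrict A) hS m, ← lintegral_indicator
    (MeasurableSet.univ_pi fun _ => hS) (PP W m)]
  have hma : Measurable fun y : Fin m → Ω =>
      (∏ j, ENNReal.ofReal (W a (y j))) * PP W m y := by
    refine Measurable.mul ?_ (measurable_PP hW)
    exact Finset.measurable_prod _ fun j _ =>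
      ENNReal.measurable_ofReal.comp ((hW.comp measurable_prodMk_left).comp
        (measurable_pi_apply j))
  have hmb : Measurable ((Set.pi Set.univ fun _ : Fin m => {z | 0 < W a z}).indicator
      (PP W m)) := (measurable_PP hW).indicator (MeasurableSet.univ_pi fun _ => hS)
  rw [lintegral_eq_zero_iff hma, lintegral_eq_zero_iff hmb, Filter.EventuallyEq,
    Filter.EventuallyEq, ae_iff, ae_iff]
  simp only [Pi.zero_apply]
  have hset : {y : Fin m → Ω | ¬ (∏ j, ENNReal.ofReal (W a (y j))) * PP W m y = (0 : ℝ≥0∞)}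
      = {y : Fin m → Ω | ¬ (Set.pi Set.univ fun _ : Fin m => {z | 0 < W a z}).indicator
          (PP W m) y = (0 : ℝ≥0∞)} := by
    ext y
    simp only [Set.mem_setOf_eq, mul_eq_zero, Finset.prod_eq_zero_iff, ENNReal.ofReal_eq_zero,
      Set.indicator_apply_eq_zero, Set.mem_univ_pi, Set.mem_setOf_eq, not_or, _root_.not_imp]
    constructor
    · rintro ⟨h1, h2⟩
      refine ⟨fun j => ?_, h2⟩
      by_contra hc
      exact h1 ⟨j, Finset.mem_univ j, not_lt.1 hc⟩
    · rintro ⟨h1, h2⟩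
      refine ⟨?_, h2⟩
      rintro ⟨j, -, hj⟩
      exact absurd (h1 j) (not_lt.2 hj)
  rw [hset]

end D

section E
variable {Ω : Type*} [MeasurableSpace Ω] {W : Ω → Ω → ℝ}

/-- bad set of a part -/
def badSet (W : Ω → Ω → ℝ) (B : Set Ω) : Set (Ω × Ω) :=
  {z : Ω × Ω | z.1 ∈ B ∧ z.2 ∈ B ∧ W z.1 z.2 ≠ 0}

lemma key_ind (μ : Measure Ω) [IsFiniteMeasure μ] (hW : Measurable (uncurry W))
    (h0 : ∀ x y, 0 ≤ W x y) :
    ∀ k : ℕ, ∀ A : Set Ω, MeasurableSet A → QQ W (μ.restrict A) (k+1) ≠ 0 →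
      QQ W (μ.restrict A) (k+2) = 0 →
      ∃ B, B ⊆ A ∧ MeasurableSet B ∧ μ B ≠ 0 ∧ (μ.prod μ) (badSet W B) = 0 := by
  intro k
  induction k with
  | zero =>
    intro A hA hQ1 hQ2
    refine ⟨A, le_refl A, hA, ?_, ?_⟩
    · rw [QQ_one, Measure.restrict_apply_univ] at hQ1
      exact hQ1
    · rw [QQ_two _ hW] at hQ2
      have hae := (lintegral_eq_zero_iff (ENNReal.measurable_ofReal.comp hW)).1 hQ2
      rw [Measure.prod_restrict] at hae
      have hWz : ∀ᵐ z ∂((μ.prod μ).restrict (A ×ˢ A)), W z.1 z.2 = 0 := by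
        filter_upwards [hae] with z hz
        simp only [Pi.zero_apply, Function.comp_apply, Function.uncurry_apply_pair,
          Function.uncurry, ENNReal.ofReal_eq_zero] at hz
        exact le_antisymm hz (h0 _ _)
      rw [ae_iff] at hWz
      rw [Measure.restrict_apply] at hWz
      · refine measure_mono_null ?_ hWz
        rintro ⟨x, y⟩ ⟨hx, hy, hne⟩
        exact ⟨hne, hx, hy⟩
      · have hWm : Measurable fun z : Ω × Ω => W z.1 z.2 := hW
        exact (measurableSet_eq_fun hWm measurable_const).compl
  | succ k ih =>
    intro A hA hQ1 hQ2
    rw [QQ_succ _ hW] at hQ1 hQ2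
    set ν := μ.restrict A with hν
    have hgmeas : ∀ m : ℕ, Measurable fun a : Ω => ∫⁻ y : Fin m → Ω,
        (∏ j, ENNReal.ofReal (W a (y j))) * PP W m y ∂(Measure.pi fun _ => ν) := by
      intro m
      have : Measurable fun q : Ω × (Fin m → Ω) =>
          (∏ j, ENNReal.ofReal (W q.1 (q.2 j))) * PP W m q.2 := by
        refine Measurable.mul ?_ ((measurable_PP hW).comp measurable_snd)
        refine Finset.measurable_prod _ fun j _ => ENNReal.measurable_ofReal.comp ?_
        exact hW.comp (measurable_fst.prodMk ((measurable_pi_apply j).comp measurable_snd))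
      exact this.lintegral_prod_right'
    set g : ℕ → Ω → ℝ≥0∞ := fun m a => ∫⁻ y : Fin m → Ω,
        (∏ j, ENNReal.ofReal (W a (y j))) * PP W m y ∂(Measure.pi fun _ => ν) with hg
    have hS2 : ν {a | g (k+2) a ≠ 0} = 0 := by
      have := (lintegral_eq_zero_iff (hgmeas (k+2))).1 hQ2
      rw [Filter.EventuallyEq, ae_iff] at this
      simpa [hg] using this
    have hS1 : ν {a | g (k+1) a ≠ 0} ≠ 0 := by
      intro hz
      apply hQ1
      refine (lintegral_eq_zero_iff (hgmeas (k+1))).2 ?_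
      rw [Filter.EventuallyEq, ae_iff]
      simpa [hg] using hz
    have hdiff : ν ({a | g (k+1) a ≠ 0} \ {a | g (k+2) a ≠ 0}) ≠ 0 := by
      intro hz
      apply hS1
      have : {a | g (k+1) a ≠ 0} ⊆ ({a | g (k+1) a ≠ 0} \ {a | g (k+2) a ≠ 0}) ∪
          {a | g (k+2) a ≠ 0} := fun a ha => by
        by_cases h : a ∈ {a | g (k+2) a ≠ 0}
        · exact Or.inr h
        · exact Or.inl ⟨ha, h⟩
      exact le_antisymm (((measure_mono this).trans (measure_union_le _ _)).trans
        (by rw [hz, hS2, add_zero])) zero_le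
    obtain ⟨a, ha1, ha2⟩ := nonempty_of_measure_ne_zero hdiff
    simp only [Set.mem_setOf_eq, Set.mem_diff, not_not] at ha1 ha2
    set A' := A ∩ {z | 0 < W a z} with hA'
    have hSA' : MeasurableSet A' :=
      hA.inter (measurableSet_lt measurable_const (hW.comp measurable_prodMk_left))
    have h1' : QQ W (μ.restrict A') (k+1) ≠ 0 := by
      intro hz
      exact ha1 ((inner_iff (A := A) μ hW a (k+1)).2 hz)
    have h2' : QQ W (μ.restrict A') (k+2) = 0 := (inner_iff (A := A) μ hW a (k+2)).1 ha2
    obtain ⟨B, hBA', hBm, hBpos, hBbad⟩ := ih A' hSA' h1' h2'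
    exact ⟨B, hBA'.trans (Set.inter_subset_left), hBm, hBpos, hBbad⟩

end E

section F
variable {Ω : Type*} [MeasurableSpace Ω] {W : Ω → Ω → ℝ}

lemma key (μ : Measure Ω) [IsProbabilityMeasure μ] (hW : Measurable (Function.uncurry W))
    (h0 : ∀ x y, 0 ≤ W x y) (L : ℕ) (hL : ∀ k, L < k → QQ W μ k = 0)
    {A : Set Ω} (hA : MeasurableSet A) (hApos : μ A ≠ 0) :
    ∃ B, B ⊆ A ∧ MeasurableSet B ∧ μ B ≠ 0 ∧ (μ.prod μ) (badSet W B) = 0 := by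
  classical
  set P : ℕ → Prop := fun n => QQ W (μ.restrict A) (n+1) ≠ 0 with hPdef
  have hP0 : P 0 := by
    rw [hPdef]
    simp only [zero_add]
    rw [QQ_one, Measure.restrict_apply_univ]
    exact hApos
  have hbound : ∀ n, P n → n ≤ L := by
    intro n hn
    by_contra hc
    push_neg at hc
    exact hn (le_antisymm ((QQ_restrict_le μ hA (n+1)).trans_eq (hL (n+1) (by omega)))
      zero_le)
  have hPk : P (Nat.findGreatest P L) := Nat.findGreatest_spec (Nat.zero_le L) hP0
  have hnot : ¬ P (Nat.findGreatest P L + 1) := by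
    by_cases hle : Nat.findGreatest P L + 1 ≤ L
    · exact Nat.findGreatest_is_greatest (Nat.lt_succ_self _) hle
    · exact fun hp => hle (hbound _ hp)
  have h2 : QQ W (μ.restrict A) (Nat.findGreatest P L + 2) = 0 := not_not.1 hnot
  exact key_ind μ hW h0 (Nat.findGreatest P L) A hA hPk h2

end F

/-- Every graphon with a bounded clique number (i.e. `t(K_k, W) = 0` for all large `k`)
is countably-partite: there is a countable measurable partition `Ω = Ω₀ ∪ Ω₁ ∪ …` such
that `W` vanishes a.e. on each `Ω_i × Ω_i`. -/
theorem bounded_clique_number_countably_partite {Ω : Type*} [MeasurableSpace Ω]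
    [StandardBorelSpace Ω] (μ : Measure Ω) [IsProbabilityMeasure μ] [NullSingletonClass μ]
    (W : Ω → Ω → ℝ) (hW : Measurable (Function.uncurry W))
    (hsymm : ∀ x y, W x y = W y x) (h0 : ∀ x y, 0 ≤ W x y) (h1 : ∀ x y, W x y ≤ 1)
    (hbdd : ∃ L : ℕ, ∀ k, L < k → cliqueDensity μ W k = 0) :
    ∃ P : ℕ → Set Ω, (∀ i, MeasurableSet (P i)) ∧
      (∀ i j, i ≠ j → Disjoint (P i) (P j)) ∧ (⋃ i, P i) = Set.univ ∧
      ∀ i, ∀ᵐ z ∂(μ.prod μ), z.1 ∈ P i → z.2 ∈ P i → W z.1 z.2 = 0 := by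
  classical
  obtain ⟨L, hL⟩ := hbdd
  have hL' : ∀ k, L < k → QQ W μ k = 0 := hL
  have hkey : ∀ A : Set Ω, MeasurableSet A → μ A ≠ 0 →
      ∃ B, B ⊆ A ∧ MeasurableSet B ∧ μ B ≠ 0 ∧ (μ.prod μ) (badSet W B) = 0 :=
    fun A hA hApos => key μ hW h0 L hL' hA hApos
  -- the half-sup greedy step
  set M : Set Ω → ℝ≥0∞ := fun U => sSup ((fun B => μ B) ''
    {B | MeasurableSet B ∧ B ⊆ U ∧ (μ.prod μ) (badSet W B) = 0}) with hM
  have hstep : ∀ U : Set Ω, ∃ B, MeasurableSet B ∧ B ⊆ U ∧ (μ.prod μ) (badSet W B) = 0 ∧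
      M U ≤ 2 * μ B := by
    intro U
    by_cases h : M U = 0
    · refine ⟨∅, MeasurableSet.empty, Set.empty_subset U, ?_, by rw [h]; exact zero_le⟩
      have hbe : badSet W (∅ : Set Ω) = ∅ := by ext z; simp [badSet]
      rw [hbe]; exact measure_empty
    · have htop : M U ≠ ⊤ := by
        have hle1 : M U ≤ 1 := by
          apply sSup_le
          rintro x ⟨B, -, rfl⟩
          exact (measure_mono (Set.subset_univ B)).trans (le_of_eq measure_univ)
        exact (hle1.trans_lt ENNReal.one_lt_top).ne
      have hhalf : M U / 2 < M U := ENNReal.half_lt_self h htop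
      obtain ⟨x, ⟨B, ⟨hBm, hBU, hBbad⟩, rfl⟩, hlt⟩ := lt_sSup_iff.1 hhalf
      refine ⟨B, hBm, hBU, hBbad, ?_⟩
      rw [ENNReal.div_lt_iff (Or.inl two_ne_zero) (Or.inl ENNReal.ofNat_ne_top)] at hlt
      calc M U ≤ μ B * 2 := hlt.le
        _ = 2 * μ B := mul_comm _ _
  choose next hnm hnsub hnbad hnhalf using hstep
  -- remainders and pieces
  set F : ℕ → Set Ω := fun n => Nat.rec Set.univ (fun _ R => R \ next R) n with hF
  have hFsucc : ∀ n, F (n+1) = F n \ next (F n) := fun n => rfl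
  have hFm : ∀ n, MeasurableSet (F n) := by
    intro n; induction n with
    | zero => exact MeasurableSet.univ
    | succ n ih => exact ih.diff (hnm _)
  set p : ℕ → Set Ω := fun n => next (F n) with hp
  have hanti : Antitone F := antitone_nat_of_succ_le fun n => by
    rw [hFsucc]; exact Set.diff_subset
  have hdisj : ∀ i j, i < j → Disjoint (p i) (p j) := by
    intro i j hij
    have h2 : p j ⊆ F i \ p i := (hnsub (F j)).trans ((hFsucc i ▸ hanti hij : F j ⊆ F (i+1)))
    exact Disjoint.mono_right h2 disjoint_sdiff_self_right
  set R : Set Ω := Set.univ \ ⋃ n, p n with hR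
  have hRm : MeasurableSet R := MeasurableSet.univ.diff (MeasurableSet.iUnion fun n => hnm _)
  have hRF : ∀ n, R ⊆ F n := by
    intro n; induction n with
    | zero => exact Set.subset_univ _ |>.trans (le_of_eq rfl)
    | succ n ih =>
      intro x hx
      rw [hFsucc]
      exact ⟨ih hx, fun hpn => hx.2 (Set.mem_iUnion.2 ⟨n, hpn⟩)⟩
  have hRnull : μ R = 0 := by
    by_contra hRpos
    obtain ⟨B, hBR, hBm, hBpos, hBbad⟩ := hkey R hRm hRpos
    have hlow : ∀ n, μ B ≤ 2 * μ (p n) := by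
      intro n
      refine le_trans (le_sSup ?_) (hnhalf (F n))
      exact ⟨B, ⟨hBm, hBR.trans (hRF n), hBbad⟩, rfl⟩
    have hdisjp : Pairwise (Function.onFun Disjoint p) := by
      intro i j hij
      rcases lt_or_gt_of_ne hij with h | h
      · exact hdisj i j h
      · exact (hdisj j i h).symm
    have hsum : ∑' n, μ (p n) ≤ 1 := by
      rw [← measure_iUnion hdisjp fun n => hnm _]
      exact (measure_mono (Set.subset_univ _)).trans (le_of_eq measure_univ)
    have htop : (⊤ : ℝ≥0∞) ≤ 2 * ∑' n, μ (p n) := by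
      rw [← ENNReal.tsum_mul_left]
      calc (⊤ : ℝ≥0∞) = ∑' _ : ℕ, μ B := (ENNReal.tsum_const_eq_top_of_ne_zero hBpos).symm
        _ ≤ ∑' n, 2 * μ (p n) := ENNReal.tsum_le_tsum hlow
    have : (⊤ : ℝ≥0∞) ≤ 2 := htop.trans (by
      calc 2 * ∑' n, μ (p n) ≤ 2 * 1 := mul_le_mul_right hsum 2
        _ = 2 := mul_one 2)
    exact absurd this (by simp)
  -- assemble the partition
  refine ⟨fun n => if n = 0 then p 0 ∪ R else p n, ?_, ?_, ?_, ?_⟩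
  · intro i
    by_cases h : i = 0 <;> simp only [h, if_true, if_false]
    · exact (hnm _).union hRm
    · exact hnm _
  · intro i j hij
    have hRdisj : ∀ n, Disjoint R (p n) := by
      intro n
      rw [Set.disjoint_left]
      intro x hx hpx
      exact hx.2 (Set.mem_iUnion.2 ⟨n, hpx⟩)
    have hpd : ∀ i j, i ≠ j → Disjoint (p i) (p j) := by
      intro i j h
      rcases lt_or_gt_of_ne h with hlt | hlt
      · exact hdisj i j hlt
      · exact (hdisj j i hlt).symm
    by_cases hi : i = 0 <;> by_cases hj : j = 0 <;>
      simp only [hi, hj, if_true, if_false]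
    · exact absurd (hi.trans hj.symm) hij
    · exact Set.disjoint_union_left.2 ⟨hpd 0 j fun h => hj h.symm, hRdisj j⟩
    · exact (Set.disjoint_union_left.2 ⟨hpd 0 i fun h => hi h.symm, hRdisj i⟩).symm
    · exact hpd i j hij
  · apply Set.eq_univ_of_forall
    intro x
    by_cases hx : x ∈ ⋃ n, p n
    · obtain ⟨n, hn⟩ := Set.mem_iUnion.1 hx
      apply Set.mem_iUnion.2
      by_cases h : n = 0
      · exact ⟨0, by simp only [if_true]; exact Or.inl (h ▸ hn)⟩
      · exact ⟨n, by simp only [h, if_false]; exact hn⟩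
    · exact Set.mem_iUnion.2 ⟨0, by simp only [if_true]; exact Or.inr ⟨trivial, hx⟩⟩
  · intro i
    have hbad : (μ.prod μ) (badSet W (if i = 0 then p 0 ∪ R else p i)) = 0 := by
      by_cases h : i = 0 <;> simp only [h, if_true, if_false]
      · refine measure_mono_null (?_ : badSet W (p 0 ∪ R) ⊆
          badSet W (p 0) ∪ (R ×ˢ Set.univ ∪ Set.univ ×ˢ R)) ?_
        · rintro ⟨x, y⟩ ⟨hx, hy, hne⟩
          rcases hx with hx | hx
          · rcases hy with hy | hy
            · exact Or.inl ⟨hx, hy, hne⟩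
            · exact Or.inr (Or.inr ⟨trivial, hy⟩)
          · exact Or.inr (Or.inl ⟨hx, trivial⟩)
        · rw [measure_union_null_iff]
          refine ⟨hnbad _, ?_⟩
          rw [measure_union_null_iff]
          constructor
          · rw [Measure.prod_prod, hRnull, zero_mul]
          · rw [Measure.prod_prod, hRnull, mul_zero]
      · exact hnbad _
    rw [ae_iff]
    refine measure_mono_null ?_ hbad
    intro z hz
    simp only [Set.mem_setOf_eq] at hz
    push_neg at hz
    exact ⟨hz.1, hz.2.1, hz.2.2⟩
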